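/- The degree-1 special derivation module b_n(1), consisting of elements of p_n(1) of the form Σ_i x_i^* ⊗ C_i with Σ_i C_i = 0 in L_n(2), is a free abelian group of rank n(n−1)/2, with basis { x_i^* ⊗ [x_j,x_i] + x_j^* ⊗ [x_i,x_j] : 1 ≤ i < j ≤ n }. -/

import Mathlib

open scoped TensorProduct

/-- The degree-`k` homogeneous part of the free Lie ring on `n` generators. -/
noncomputable def Ln (n : ℕ) : ℕ → Submodule ℤ (FreeLieAlgebra ℤ (Fin n))
  | 0 => ⊥
  | 1 => Submodule.span ℤ (Set.range (FreeLieAlgebra.of ℤ))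
  | (k+2) => Submodule.span ℤ
      {y | ∃ a ∈ Ln n (k+1), ∃ i : Fin n, y = ⁅a, FreeLieAlgebra.of ℤ i⁆}

/-- The tangential derivation module `p_n(k)`, in the representation
`H^* ⊗ L_n(k+1) ≅ (Fin n → L_n)` (the `i`-th component records `C_i` in
`Σᵢ x_i^* ⊗ C_i`), spanned by the elements `x_i^* ⊗ [c, x_i]` with `c ∈ L_n(k)`. -/
noncomputable def pnM (n k : ℕ) : Submodule ℤ (Fin n → FreeLieAlgebra ℤ (Fin n)) :=
  Submodule.span ℤ
    {f | ∃ i : Fin n, ∃ c ∈ Ln n k, f = Pi.single i ⁅c, FreeLieAlgebra.of ℤ i⁆}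

/-- Summation map sending `Σᵢ x_i^* ⊗ C_i` to `Σᵢ C_i`. -/
noncomputable def sumMap (n : ℕ) :
    (Fin n → FreeLieAlgebra ℤ (Fin n)) →ₗ[ℤ] FreeLieAlgebra ℤ (Fin n) :=
  LinearMap.lsum ℤ (fun _ : Fin n => FreeLieAlgebra ℤ (Fin n)) ℤ (fun _ => LinearMap.id)

/-- The special derivation module `b_n(k)`. -/
noncomputable def bnM (n k : ℕ) : Submodule ℤ (Fin n → FreeLieAlgebra ℤ (Fin n)) :=
  pnM n k ⊓ LinearMap.ker (sumMap n)

noncomputable section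
namespace Bn
variable (n : ℕ)

attribute [local instance 100] LieRing.ofAssociativeRing

def φ : FreeLieAlgebra ℤ (Fin n) →ₗ⁅ℤ⁆ FreeAlgebra ℤ (Fin n) :=
  FreeLieAlgebra.lift ℤ (FreeAlgebra.ι ℤ)

def ψ : FreeLieAlgebra ℤ (Fin n) →ₗ[ℤ] MonoidAlgebra ℤ (FreeMonoid (Fin n)) :=
  (FreeAlgebra.equivMonoidAlgebraFreeMonoid (R := ℤ) (X := Fin n)).toLinearMap ∘ₗ (φ n).toLinearMap

def coef (i j : Fin n) : FreeLieAlgebra ℤ (Fin n) →ₗ[ℤ] ℤ :=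
  (Finsupp.lapply (FreeMonoid.of j * FreeMonoid.of i) : (FreeMonoid (Fin n) →₀ ℤ) →ₗ[ℤ] ℤ) ∘ₗ
    (MonoidAlgebra.coeffLinearEquiv ℤ).toLinearMap ∘ₗ ψ n

lemma word_eq_iff (a b c d : Fin n) :
    FreeMonoid.of a * FreeMonoid.of b = FreeMonoid.of c * FreeMonoid.of d ↔ a = c ∧ b = d := by
  constructor
  · intro h
    have := congrArg FreeMonoid.toList h
    simpa [FreeMonoid.toList_mul, FreeMonoid.toList_of] using this
  · rintro ⟨rfl, rfl⟩; rfl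

lemma coef_bracket (i j a b : Fin n) :
    coef n i j ⁅FreeLieAlgebra.of ℤ a, FreeLieAlgebra.of ℤ b⁆ =
      (if a = j ∧ b = i then 1 else 0) - (if b = j ∧ a = i then 1 else 0) := by
  have h1 : φ n ⁅FreeLieAlgebra.of ℤ a, FreeLieAlgebra.of ℤ b⁆ =
      FreeAlgebra.ι ℤ a * FreeAlgebra.ι ℤ b - FreeAlgebra.ι ℤ b * FreeAlgebra.ι ℤ a := by
    rw [LieHom.map_lie]
    simp [φ, FreeLieAlgebra.lift_of_apply, Ring.lie_def]
    erw [FreeLieAlgebra.lift_of_apply, FreeLieAlgebra.lift_of_apply]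
  have hι : ∀ x : Fin n, FreeAlgebra.equivMonoidAlgebraFreeMonoid (R := ℤ) (X := Fin n)
      (FreeAlgebra.ι ℤ x) = MonoidAlgebra.single (FreeMonoid.of x) 1 := by
    intro x
    simp [FreeAlgebra.equivMonoidAlgebraFreeMonoid, MonoidAlgebra.of_apply]
  have h2 : ψ n ⁅FreeLieAlgebra.of ℤ a, FreeLieAlgebra.of ℤ b⁆ =
      MonoidAlgebra.single (FreeMonoid.of a * FreeMonoid.of b) 1 -
      MonoidAlgebra.single (FreeMonoid.of b * FreeMonoid.of a) 1 := by
    show FreeAlgebra.equivMonoidAlgebraFreeMonoid (φ n ⁅FreeLieAlgebra.of ℤ a, FreeLieAlgebra.of ℤ b⁆) = _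
    simp only [ψ, LinearMap.comp_apply, LieHom.coe_toLinearMap, h1, AlgEquiv.toLinearMap_apply,
      map_sub, map_mul, hι, MonoidAlgebra.single_mul_single, one_mul]
  rw [coef, LinearMap.comp_apply, LinearMap.comp_apply]
  erw [h2]
  rw [Finsupp.lapply_apply]
  rw [LinearEquiv.coe_coe, MonoidAlgebra.coeffLinearEquiv_apply, MonoidAlgebra.coeff_sub,
    MonoidAlgebra.coeff_single, MonoidAlgebra.coeff_single]
  classical
  rw [Finsupp.sub_apply, Finsupp.single_apply, Finsupp.single_apply]
  rw [if_congr (word_eq_iff n a b j i) rfl rfl, if_congr (word_eq_iff n b a j i) rfl rfl]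

/-- the generators of `p_n(1)` -/
def g (q : Fin n × Fin n) : Fin n → FreeLieAlgebra ℤ (Fin n) :=
  Pi.single q.1 ⁅FreeLieAlgebra.of ℤ q.2, FreeLieAlgebra.of ℤ q.1⁆

/-- the claimed basis vectors of `b_n(1)` -/
def b' (p : {p : Fin n × Fin n // p.1 < p.2}) : Fin n → FreeLieAlgebra ℤ (Fin n) :=
  g n p.1 + g n p.1.swap

/-- coefficient-extraction functional on `Fin n → L` -/
def E (i j : Fin n) : (Fin n → FreeLieAlgebra ℤ (Fin n)) →ₗ[ℤ] ℤ :=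
  coef n i j ∘ₗ LinearMap.proj i

lemma E_g (i j : Fin n) (hij : i ≠ j) (q : Fin n × Fin n) :
    E n i j (g n q) = if q = (i, j) then 1 else 0 := by
  classical
  obtain ⟨a, b⟩ := q
  rw [E, LinearMap.comp_apply]
  have : (LinearMap.proj i : _ →ₗ[ℤ] FreeLieAlgebra ℤ (Fin n)) (g n (a, b)) =
      if a = i then ⁅FreeLieAlgebra.of ℤ b, FreeLieAlgebra.of ℤ a⁆ else 0 := by
    simp [g, Pi.single_apply, eq_comm]
  rw [this]
  by_cases ha : a = i
  · subst ha
    rw [if_pos rfl, coef_bracket]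
    simp [Prod.ext_iff, hij]
  · rw [if_neg ha]
    simp [Prod.ext_iff, ha]

lemma E_b' (p q : {p : Fin n × Fin n // p.1 < p.2}) :
    E n p.1.1 p.1.2 (b' n q) = if q = p then 1 else 0 := by
  classical
  have hij : p.1.1 ≠ p.1.2 := ne_of_lt p.2
  rw [b', map_add, E_g n _ _ hij, E_g n _ _ hij]
  have h2 : q.1.swap ≠ (p.1.1, p.1.2) := by
    intro h
    have h1 : q.1.2 = p.1.1 := congrArg Prod.fst h
    have h2' : q.1.1 = p.1.2 := congrArg Prod.snd h
    exact absurd (h1 ▸ h2' ▸ q.2) (not_lt.mpr (le_of_lt p.2))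
  rw [if_neg h2, add_zero]
  exact if_congr (by simp [Subtype.ext_iff]) rfl rfl

lemma sumMap_single (i : Fin n) (x : FreeLieAlgebra ℤ (Fin n)) :
    sumMap n (Pi.single i x) = x := by
  classical
  rw [sumMap, LinearMap.lsum_apply]
  simp [LinearMap.proj, Pi.single_apply, Finset.sum_ite_eq']

lemma g_mem (q : Fin n × Fin n) : g n q ∈ pnM n 1 := by
  refine Submodule.subset_span ⟨q.1, FreeLieAlgebra.of ℤ q.2, ?_, rfl⟩
  exact Submodule.subset_span ⟨q.2, rfl⟩

/-- the map `c ↦ Pi.single i ⁅c, x_i⁆` as a linear map -/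
def μ (i : Fin n) : FreeLieAlgebra ℤ (Fin n) →ₗ[ℤ] (Fin n → FreeLieAlgebra ℤ (Fin n)) :=
  (LinearMap.single ℤ (fun _ : Fin n => FreeLieAlgebra ℤ (Fin n)) i) ∘ₗ
    (-(LieAlgebra.ad ℤ (FreeLieAlgebra ℤ (Fin n)) (FreeLieAlgebra.of ℤ i)))

lemma μ_apply (i : Fin n) (c : FreeLieAlgebra ℤ (Fin n)) :
    μ n i c = Pi.single i ⁅c, FreeLieAlgebra.of ℤ i⁆ := by
  rw [μ, LinearMap.comp_apply, LinearMap.neg_apply, LieAlgebra.ad_apply, lie_skew, LinearMap.coe_single]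

lemma pnM_eq : pnM n 1 = Submodule.span ℤ (Set.range (g n)) := by
  apply le_antisymm
  · rw [pnM, Submodule.span_le]
    rintro f ⟨i, c, hc, rfl⟩
    have h1 : Pi.single i ⁅c, FreeLieAlgebra.of ℤ i⁆ = μ n i c := (μ_apply n i c).symm
    rw [h1]
    have h2 : μ n i c ∈ Submodule.map (μ n i) (Ln n 1) := Submodule.mem_map_of_mem hc
    rw [show Ln n 1 = Submodule.span ℤ (Set.range (FreeLieAlgebra.of ℤ)) from rfl,
      Submodule.map_span] at h2
    refine Submodule.span_mono ?_ h2
    rintro _ ⟨_, ⟨j, rfl⟩, rfl⟩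
    exact ⟨(i, j), (μ_apply n i _).symm⟩
  · rw [Submodule.span_le]
    rintro _ ⟨q, rfl⟩
    exact SetLike.mem_coe.mpr (g_mem n q)

lemma b'_mem (p : {p : Fin n × Fin n // p.1 < p.2}) : b' n p ∈ bnM n 1 := by
  refine Submodule.mem_inf.mpr ⟨add_mem (g_mem n p.1) (g_mem n p.1.swap), ?_⟩
  rw [LinearMap.mem_ker, b', map_add, g, g, sumMap_single, sumMap_single]
  rw [Prod.fst_swap, Prod.snd_swap, add_eq_zero_iff_eq_neg, ← lie_skew]

lemma sum_pairs {M : Type*} [AddCommMonoid M] (F : Fin n × Fin n → M)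
    (hdiag : ∀ i, F (i, i) = 0) :
    ∑ q : Fin n × Fin n, F q =
      ∑ p : {p : Fin n × Fin n // p.1 < p.2}, (F p.1 + F p.1.swap) := by
  classical
  have hsub : ∀ f : Fin n × Fin n → M,
      ∑ p : {p : Fin n × Fin n // p.1 < p.2}, f p.1 =
        ∑ q ∈ Finset.univ.filter (fun q : Fin n × Fin n => q.1 < q.2), f q :=
    fun f => (Finset.sum_subtype _ (fun x => by simp) f).symm
  rw [Finset.sum_add_distrib, hsub F, hsub (fun q => F q.swap),
    ← Finset.sum_filter_add_sum_filter_not Finset.univ (fun q : Fin n × Fin n => q.1 < q.2) F]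
  congr 1
  have hz : ∀ q ∈ Finset.univ.filter (fun q : Fin n × Fin n => ¬ q.1 < q.2),
      F q = if q.2 < q.1 then F q else 0 := by
    intro q hq
    by_cases h : q.2 < q.1
    · rw [if_pos h]
    · rw [if_neg h]
      have h1 : ¬ q.1 < q.2 := (Finset.mem_filter.mp hq).2
      obtain ⟨a, b⟩ := q
      have : a = b := le_antisymm (not_lt.mp h) (not_lt.mp h1)
      subst this
      exact hdiag a
  rw [Finset.sum_congr rfl hz, Finset.sum_ite, Finset.sum_const_zero, add_zero,
    Finset.filter_filter]
  refine Finset.sum_nbij' Prod.swap Prod.swap ?_ ?_ ?_ ?_ ?_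
  · intro q hq
    simp only [Finset.mem_filter, Finset.mem_univ, true_and] at hq ⊢
    exact hq.2
  · intro q hq
    simp only [Finset.mem_filter, Finset.mem_univ, true_and] at hq ⊢
    exact ⟨not_lt.mpr (le_of_lt hq), hq⟩
  · intro q _; exact Prod.swap_swap q
  · intro q _; exact Prod.swap_swap q
  · intro q _; rw [Prod.swap_swap]

lemma b'_li : LinearIndependent ℤ (b' n) := by
  classical
  rw [Fintype.linearIndependent_iff]
  intro c hc p
  have h0 := congrArg (E n p.1.1 p.1.2) hc
  rw [map_sum, map_zero] at h0
  simp only [map_smul, E_b', smul_eq_mul, mul_ite, mul_one, mul_zero] at h0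
  rwa [Finset.sum_ite_eq' Finset.univ p c, if_pos (Finset.mem_univ p)] at h0

lemma g_diag (i : Fin n) : g n (i, i) = 0 := by
  simp [g, lie_self]

lemma bnM_eq : bnM n 1 = Submodule.span ℤ (Set.range (b' n)) := by
  classical
  apply le_antisymm
  · intro x hx
    obtain ⟨hx1, hx2⟩ := Submodule.mem_inf.mp hx
    rw [pnM_eq] at hx1
    obtain ⟨c, hc⟩ := (Submodule.mem_span_range_iff_exists_fun ℤ).mp hx1
    rw [LinearMap.mem_ker] at hx2
    have hq : ∀ (i j : Fin n) (q : Fin n × Fin n), coef n i j (sumMap n (g n q)) =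
        (if q = (i, j) then 1 else 0) - (if q = (j, i) then 1 else 0) := by
      intro i j q
      rw [g, sumMap_single, coef_bracket]
      obtain ⟨a, b⟩ := q
      congr 1
      · exact if_congr (by simp [Prod.ext_iff, and_comm]) rfl rfl
      · exact if_congr (by simp [Prod.ext_iff, and_comm]) rfl rfl
    have hsym : ∀ i j : Fin n, c (i, j) = c (j, i) := by
      intro i j
      have h0 : coef n i j (sumMap n x) = 0 := by rw [hx2, map_zero]
      rw [← hc, map_sum, map_sum] at h0
      simp only [map_smul, hq, smul_eq_mul, mul_sub, mul_ite, mul_one, mul_zero] at h0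
      rw [Finset.sum_sub_distrib, Finset.sum_ite_eq' Finset.univ (i, j) c,
        Finset.sum_ite_eq' Finset.univ (j, i) c, if_pos (Finset.mem_univ _),
        if_pos (Finset.mem_univ _), sub_eq_zero] at h0
      exact h0
    have hx' : x = ∑ p : {p : Fin n × Fin n // p.1 < p.2}, c p.1 • b' n p := by
      rw [← hc, sum_pairs n (fun q => c q • g n q) (fun i => by show c (i, i) • g n (i, i) = 0; rw [g_diag, smul_zero])]
      refine Finset.sum_congr rfl fun p _ => ?_
      rw [b', smul_add]
      congr 1
      obtain ⟨⟨i, j⟩, hp⟩ := p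
      show c (j, i) • g n (j, i) = c (i, j) • g n (j, i)
      rw [hsym i j]
    rw [hx']
    exact Submodule.sum_mem _ fun p _ =>
      Submodule.smul_mem _ _ (Submodule.subset_span ⟨p, rfl⟩)
  · rw [Submodule.span_le]
    rintro _ ⟨p, rfl⟩
    exact SetLike.mem_coe.mpr (b'_mem n p)

lemma card_lt : Fintype.card {p : Fin n × Fin n // p.1 < p.2} = n * (n - 1) / 2 := by
  have e : {p : Fin n × Fin n // p.1 < p.2} ≃ (Σ j : Fin n, Fin j.val) :=
    { toFun := fun p => ⟨p.1.2, ⟨p.1.1.val, p.2⟩⟩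
      invFun := fun x => ⟨(⟨x.2.val, lt_trans x.2.isLt x.1.isLt⟩, x.1), x.2.isLt⟩
      left_inv := fun p => rfl
      right_inv := fun x => rfl }
  rw [Fintype.card_congr e, Fintype.card_sigma]
  simp only [Fintype.card_fin]
  rw [Fin.sum_univ_eq_sum_range (fun i => i) n, Finset.sum_range_id]

end Bn
end

/-- `b_n(1)` is a free abelian group of rank `n(n−1)/2`, with basis the elements
`x_i^* ⊗ [x_j,x_i] + x_j^* ⊗ [x_i,x_j]` for `i < j`. -/
theorem bn_one_basis (n : ℕ) :
    Module.finrank ℤ (bnM n 1) = n * (n - 1) / 2 ∧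
    ∃ b : Module.Basis {p : Fin n × Fin n // p.1 < p.2} ℤ (bnM n 1),
      ∀ p : {p : Fin n × Fin n // p.1 < p.2},
        (b p : Fin n → FreeLieAlgebra ℤ (Fin n)) =
          Pi.single p.1.1 ⁅FreeLieAlgebra.of ℤ p.1.2, FreeLieAlgebra.of ℤ p.1.1⁆ +
          Pi.single p.1.2 ⁅FreeLieAlgebra.of ℤ p.1.1, FreeLieAlgebra.of ℤ p.1.2⁆ := by
  classical
  have hspan := Bn.bnM_eq n
  have hli := Bn.b'_li n
  let b0 : Module.Basis {p : Fin n × Fin n // p.1 < p.2} ℤ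
      (Submodule.span ℤ (Set.range (Bn.b' n))) := Module.Basis.span hli
  let e := LinearEquiv.ofEq _ _ hspan.symm
  let b := b0.map e
  have hb : ∀ p, (b p : Fin n → FreeLieAlgebra ℤ (Fin n)) = Bn.b' n p := by
    intro p
    show ((e (b0 p) : bnM n 1) : Fin n → FreeLieAlgebra ℤ (Fin n)) = _
    rw [LinearEquiv.coe_ofEq_apply, Module.Basis.span_apply]
  refine ⟨?_, b, fun p => ?_⟩
  · rw [Module.finrank_eq_card_basis b, Bn.card_lt]
  · rw [hb p]; rfl
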